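/- (3-Heisenberg-Robertson-Schrödinger uncertainty principle on L³.) Let (Ω, μ) be a measure space, let f : Ω → ℝ lie in L³(Ω, μ) with ∫ f³ dμ = 1, and let φ, ψ, χ : Ω → ℝ be measurable and essentially bounded. Set a := ∫ φ·f³ dμ, b := ∫ ψ·f³ dμ, c := ∫ χ·f³ dμ, and Δ(φ) := ‖φ·f − a·f‖_{L³}, Δ(ψ) := ‖ψ·f − b·f‖_{L³}, Δ(χ) := ‖χ·f − c·f‖_{L³}. Then (1/27)·(Δ(φ) + Δ(ψ) + Δ(χ))³ ≥ Δ(φ)·Δ(ψ)·Δ(χ) ≥ | ∫ (φψχ − a·ψχ − b·φχ − c·φψ)·f³ dμ + 2abc |. -/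

import Mathlib

open MeasureTheory

/-- **3-Heisenberg–Robertson–Schrödinger uncertainty principle on `L³(Ω, μ)`.**
For a state `f` with `∫ f³ = 1` and essentially bounded measurable multipliers
`φ, ψ, χ` with 3-expectations `a, b, c` and 3-uncertainties `Δ(φ), Δ(ψ), Δ(χ)`:
`(1/27)(Δ(φ)+Δ(ψ)+Δ(χ))³ ≥ Δ(φ)Δ(ψ)Δ(χ) ≥ |∫ (φψχ − aψχ − bφχ − cφψ) f³ dμ + 2abc|`. -/
theorem L3_three_operator_uncertainty
    {Ω : Type*} [MeasurableSpace Ω] (μ : Measure Ω)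
    (f φ ψ χ : Ω → ℝ)
    (hf : MemLp f 3 μ) (hf1 : ∫ x, (f x) ^ 3 ∂μ = 1)
    (hφm : Measurable φ) (hφb : MemLp φ ⊤ μ)
    (hψm : Measurable ψ) (hψb : MemLp ψ ⊤ μ)
    (hχm : Measurable χ) (hχb : MemLp χ ⊤ μ)
    (a b c : ℝ)
    (ha : a = ∫ x, φ x * (f x) ^ 3 ∂μ)
    (hb : b = ∫ x, ψ x * (f x) ^ 3 ∂μ)
    (hc : c = ∫ x, χ x * (f x) ^ 3 ∂μ)
    (Δφ Δψ Δχ : ℝ)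
    (hΔφ : Δφ = (∫ x, |φ x * f x - a * f x| ^ 3 ∂μ) ^ ((1 : ℝ) / 3))
    (hΔψ : Δψ = (∫ x, |ψ x * f x - b * f x| ^ 3 ∂μ) ^ ((1 : ℝ) / 3))
    (hΔχ : Δχ = (∫ x, |χ x * f x - c * f x| ^ 3 ∂μ) ^ ((1 : ℝ) / 3)) :
    (1 / 27) * (Δφ + Δψ + Δχ) ^ 3 ≥ Δφ * Δψ * Δχ
    ∧ Δφ * Δψ * Δχ
      ≥ |(∫ x, (φ x * ψ x * χ x - a * (ψ x * χ x) - b * (φ x * χ x) - c * (φ x * ψ x))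
            * (f x) ^ 3 ∂μ) + 2 * a * b * c| := by
  -- ENNReal exponent arithmetic
  have h32 : ENNReal.ofReal ((3:ℝ)/2) = 3/2 := by
    rw [ENNReal.ofReal_div_of_pos (by norm_num)]; norm_num
  have h3E : ENNReal.ofReal (3:ℝ) = 3 := by norm_num
  have h2E : ENNReal.ofReal (2:ℝ) = 2 := by norm_num
  have h3232 : (1:ENNReal)/(3/2) = 1/3 + 1/3 := by
    rw [one_div, ENNReal.inv_div (by norm_num) (by norm_num), ENNReal.div_add_div_same]
    norm_num
  have h11 : (1:ENNReal)/1 = 1/(3/2) + 1/3 := by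
    rw [one_div, one_div, ENNReal.inv_div (by norm_num) (by norm_num), inv_one,
      ENNReal.div_add_div_same, show (2:ENNReal)+1 = 3 from by norm_num,
      ENNReal.div_self (by norm_num) (by norm_num)]
  have h332 : (3:ENNReal) / (3/2) = 2 := by
    rw [ENNReal.div_eq_inv_mul, ENNReal.inv_div (by norm_num) (by norm_num),
      show ((2:ENNReal)/3*3) = 2/3*3 from rfl,
      ENNReal.div_mul_cancel (by norm_num) (by norm_num)]
  -- the three deviation functions
  set g₁ : Ω → ℝ := fun x => φ x * f x - a * f x with hg₁'
  set g₂ : Ω → ℝ := fun x => ψ x * f x - b * f x with hg₂'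
  set g₃ : Ω → ℝ := fun x => χ x * f x - c * f x with hg₃'
  -- membership in L³
  have hmem : ∀ (θ : Ω → ℝ) (t : ℝ), MemLp θ ⊤ μ →
      MemLp (fun x => θ x * f x - t * f x) 3 μ := by
    intro θ t hθ
    have hθa : MemLp (fun x => θ x - t) ⊤ μ := hθ.sub (memLp_top_const t)
    have h := hf.smul (r := 3) hθa
    have heq : (fun x => θ x * f x - t * f x) = (fun x => θ x - t) • f := by
      funext x; simp only [Pi.smul_apply', smul_eq_mul]; ring
    rwa [heq]
  have hg1 : MemLp g₁ 3 μ := hmem φ a hφb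
  have hg2 : MemLp g₂ 3 μ := hmem ψ b hψb
  have hg3 : MemLp g₃ 3 μ := hmem χ c hχb
  -- nonnegativity of the Δ's
  have hX0 : 0 ≤ ∫ x, |g₁ x| ^ 3 ∂μ := integral_nonneg fun x => by positivity
  have hY0 : 0 ≤ ∫ x, |g₂ x| ^ 3 ∂μ := integral_nonneg fun x => by positivity
  have hZ0 : 0 ≤ ∫ x, |g₃ x| ^ 3 ∂μ := integral_nonneg fun x => by positivity
  have hΔφ0 : 0 ≤ Δφ := by rw [hΔφ]; positivity
  have hΔψ0 : 0 ≤ Δψ := by rw [hΔψ]; positivity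
  have hΔχ0 : 0 ≤ Δχ := by rw [hΔχ]; positivity
  constructor
  · -- AM–GM
    nlinarith [mul_nonneg hΔφ0 hΔψ0, mul_nonneg hΔψ0 hΔχ0, mul_nonneg hΔφ0 hΔχ0,
      mul_nonneg hΔχ0 (sq_nonneg (Δφ-Δψ)), mul_nonneg hΔφ0 (sq_nonneg (Δψ-Δχ)),
      mul_nonneg hΔψ0 (sq_nonneg (Δφ-Δχ)),
      mul_nonneg hΔφ0 (sq_nonneg (Δφ-Δψ)), mul_nonneg hΔψ0 (sq_nonneg (Δψ-Δχ)),
      mul_nonneg hΔχ0 (sq_nonneg (Δφ-Δχ)), mul_nonneg hΔψ0 (sq_nonneg (Δφ-Δψ)),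
      mul_nonneg hΔχ0 (sq_nonneg (Δψ-Δχ)), mul_nonneg hΔφ0 (sq_nonneg (Δφ-Δχ))]
  -- main inequality
  -- integrability facts
  · have hff : MemLp (f • f) (3/2 : ENNReal) μ := hf.smul hf (hpqr := ⟨by simpa only [one_div] using h3232.symm⟩)
    have hf3mem : MemLp (fun x => f x ^ 3) 1 μ := by
      have h := hf.smul hff (hpqr := ⟨by simpa only [one_div] using h11.symm⟩)
      have heq : (fun x => f x ^ 3) = (f • f) • f := by
        funext x; simp only [Pi.smul_apply', Pi.smul_apply, Pi.mul_apply, smul_eq_mul]; ring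
      rwa [heq]
    have hf3 : Integrable (fun x => f x ^ 3) μ := memLp_one_iff_integrable.1 hf3mem
    have hmulint : ∀ (θ : Ω → ℝ), MemLp θ ⊤ μ → Integrable (fun x => θ x * f x ^ 3) μ := by
      intro θ hθ
      have h := hf3mem.smul (r := 1) hθ
      have heq : (fun x => θ x * f x ^ 3) = θ • fun x => f x ^ 3 := by
        funext x; simp only [Pi.smul_apply', smul_eq_mul]
      rw [heq]; exact memLp_one_iff_integrable.1 h
    have hbmul : ∀ (θ₁ θ₂ : Ω → ℝ), MemLp θ₁ ⊤ μ → MemLp θ₂ ⊤ μ →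
        MemLp (fun x => θ₁ x * θ₂ x) ⊤ μ := by
      intro θ₁ θ₂ h1 h2
      have h := h2.smul (r := ⊤) h1
      have heq : (fun x => θ₁ x * θ₂ x) = θ₁ • θ₂ := by
        funext x; simp only [Pi.smul_apply', smul_eq_mul]
      rwa [heq]
    have hIχ := hmulint χ hχb
    have hIφ := hmulint φ hφb
    have hIψ := hmulint ψ hψb
    have hIψχ := hmulint (fun x => ψ x * χ x) (hbmul ψ χ hψb hχb)
    have hIφχ := hmulint (fun x => φ x * χ x) (hbmul φ χ hφb hχb)
    have hIφψ := hmulint (fun x => φ x * ψ x) (hbmul φ ψ hφb hψb)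
    have hIφψχ := hmulint (fun x => φ x * ψ x * χ x)
      (hbmul (fun x => φ x * ψ x) χ (hbmul φ ψ hφb hψb) hχb)
    -- g₂ * g₃ in L^{3/2}
    have hg23 : MemLp (fun x => g₂ x * g₃ x) (3/2 : ENNReal) μ := by
      have h := hg3.smul hg2 (hpqr := ⟨by simpa only [one_div] using h3232.symm⟩)
      have heq : (fun x => g₂ x * g₃ x) = g₂ • g₃ := by
        funext x; simp only [Pi.smul_apply', smul_eq_mul]
      rwa [heq]
    -- product integrable
    have hP : Integrable (fun x => (g₂ x * g₃ x) * g₁ x) μ := by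
      have h := hg1.smul hg23 (hpqr := ⟨by simpa only [one_div] using h11.symm⟩)
      have heq : (fun x => (g₂ x * g₃ x) * g₁ x) = (fun x => g₂ x * g₃ x) • g₁ := by
        funext x; simp only [Pi.smul_apply', smul_eq_mul]
      rw [heq]; exact memLp_one_iff_integrable.1 h
    -- the integrand A and remainder B
    have hIA : Integrable (fun x =>
        (φ x * ψ x * χ x - a * (ψ x * χ x) - b * (φ x * χ x) - c * (φ x * ψ x)) * f x ^ 3) μ := by
      have heq : (fun x =>
          (φ x * ψ x * χ x - a * (ψ x * χ x) - b * (φ x * χ x) - c * (φ x * ψ x)) * f x ^ 3)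
          = fun x => ((φ x * ψ x * χ x) * f x ^ 3 - a * ((ψ x * χ x) * f x ^ 3))
              - b * ((φ x * χ x) * f x ^ 3) - c * ((φ x * ψ x) * f x ^ 3) := by
        funext x; ring
      rw [heq]
      exact ((hIφψχ.sub (hIψχ.const_mul a)).sub (hIφχ.const_mul b)).sub (hIφψ.const_mul c)
    have hJ1 : Integrable (fun x => a * b * (χ x * f x ^ 3)) μ := hIχ.const_mul _
    have hJ2 : Integrable (fun x => b * c * (φ x * f x ^ 3)) μ := hIφ.const_mul _
    have hJ3 : Integrable (fun x => c * a * (ψ x * f x ^ 3)) μ := hIψ.const_mul _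
    have hJ4 : Integrable (fun x => a * b * c * f x ^ 3) μ := hf3.const_mul _
    have hJ12 : Integrable (fun x => a * b * (χ x * f x ^ 3) + b * c * (φ x * f x ^ 3)) μ := by
      exact hJ1.add hJ2
    have hJ123 : Integrable (fun x =>
        a * b * (χ x * f x ^ 3) + b * c * (φ x * f x ^ 3) + c * a * (ψ x * f x ^ 3)) μ := by
      exact hJ12.add hJ3
    have hIB : Integrable (fun x =>
        a * b * (χ x * f x ^ 3) + b * c * (φ x * f x ^ 3) + c * a * (ψ x * f x ^ 3)
          - a * b * c * f x ^ 3) μ := by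
      exact hJ123.sub hJ4
    -- the key identity
    have hkey : ∫ x, (g₂ x * g₃ x) * g₁ x ∂μ
        = (∫ x, (φ x * ψ x * χ x - a * (ψ x * χ x) - b * (φ x * χ x) - c * (φ x * ψ x))
              * f x ^ 3 ∂μ) + 2 * a * b * c := by
      have heq : (fun x => (g₂ x * g₃ x) * g₁ x)
          = fun x => (φ x * ψ x * χ x - a * (ψ x * χ x) - b * (φ x * χ x) - c * (φ x * ψ x))
                * f x ^ 3
              + (a * b * (χ x * f x ^ 3) + b * c * (φ x * f x ^ 3) + c * a * (ψ x * f x ^ 3)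
                  - a * b * c * f x ^ 3) := by
        funext x; simp only [hg₁', hg₂', hg₃']; ring
      rw [heq, integral_add hIA hIB, integral_sub hJ123 hJ4,
        integral_add hJ12 hJ3, integral_add hJ1 hJ2,
        integral_const_mul, integral_const_mul, integral_const_mul, integral_const_mul,
        ← hc, ← ha, ← hb, hf1]
      ring
    -- Hölder, step 1 : |g₁| against |g₂·g₃|
    have hpq : Real.HolderConjugate 3 (3/2) := Real.holderConjugate_iff.mpr ⟨by norm_num, by norm_num⟩
    have hMg1 : MemLp (fun x => |g₁ x|) (ENNReal.ofReal 3) μ := by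
      rw [h3E]; simpa only [Real.norm_eq_abs] using hg1.norm
    have hMg23 : MemLp (fun x => |g₂ x * g₃ x|) (ENNReal.ofReal ((3:ℝ)/2)) μ := by
      rw [h32]; simpa only [Real.norm_eq_abs] using hg23.norm
    have hHA := integral_mul_le_Lp_mul_Lq_of_nonneg hpq
      (Filter.Eventually.of_forall fun x => abs_nonneg _)
      (Filter.Eventually.of_forall fun x => abs_nonneg _) hMg1 hMg23
    -- Hölder, step 2 : |g₂|^{3/2} against |g₃|^{3/2}
    have hpq2 : Real.HolderConjugate 2 2 := Real.holderConjugate_iff.mpr ⟨by norm_num, by norm_num⟩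
    have hMr : ∀ (g : Ω → ℝ), MemLp g 3 μ →
        MemLp (fun x => |g x| ^ ((3:ℝ)/2)) (ENNReal.ofReal 2) μ := by
      intro g hg
      have h := hg.norm_rpow_div (ENNReal.ofReal ((3:ℝ)/2))
      rw [h32, h332, ENNReal.toReal_div] at h
      rw [h2E]
      simpa only [Real.norm_eq_abs, ENNReal.toReal_ofNat] using h
    have hHB := integral_mul_le_Lp_mul_Lq_of_nonneg hpq2
      (Filter.Eventually.of_forall fun x => Real.rpow_nonneg (abs_nonneg _) _)
      (Filter.Eventually.of_forall fun x => Real.rpow_nonneg (abs_nonneg _) _)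
      (hMr g₂ hg2) (hMr g₃ hg3)
    -- rewrite the pieces of hHB
    have hrw2 : ∀ (g : Ω → ℝ), (∫ x, (|g x| ^ ((3:ℝ)/2)) ^ (2:ℝ) ∂μ) = ∫ x, |g x| ^ 3 ∂μ := by
      intro g
      refine integral_congr_ae (Filter.Eventually.of_forall fun x => ?_)
      show (|g x| ^ ((3:ℝ)/2)) ^ (2:ℝ) = |g x| ^ 3
      rw [← Real.rpow_natCast (|g x|) 3, ← Real.rpow_mul (abs_nonneg _)]
      norm_num
    rw [hrw2 g₂, hrw2 g₃] at hHB
    -- rewrite pieces of hHA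
    have hrw3 : (∫ x, |g₁ x| ^ (3:ℝ) ∂μ) = ∫ x, |g₁ x| ^ 3 ∂μ := by
      refine integral_congr_ae (Filter.Eventually.of_forall fun x => ?_)
      show |g₁ x| ^ (3:ℝ) = |g₁ x| ^ 3
      rw [← Real.rpow_natCast (|g₁ x|) 3]; norm_num
    have hT : (∫ x, |g₂ x * g₃ x| ^ ((3:ℝ)/2) ∂μ)
        = ∫ x, |g₂ x| ^ ((3:ℝ)/2) * |g₃ x| ^ ((3:ℝ)/2) ∂μ := by
      refine integral_congr_ae (Filter.Eventually.of_forall fun x => ?_)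
      show |g₂ x * g₃ x| ^ ((3:ℝ)/2) = |g₂ x| ^ ((3:ℝ)/2) * |g₃ x| ^ ((3:ℝ)/2)
      rw [abs_mul, Real.mul_rpow (abs_nonneg _) (abs_nonneg _)]
    rw [hrw3, hT] at hHA
    -- put everything together
    set X := ∫ x, |g₁ x| ^ 3 ∂μ
    set Y := ∫ x, |g₂ x| ^ 3 ∂μ
    set Z := ∫ x, |g₃ x| ^ 3 ∂μ
    have hT0 : 0 ≤ ∫ x, |g₂ x| ^ ((3:ℝ)/2) * |g₃ x| ^ ((3:ℝ)/2) ∂μ :=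
      integral_nonneg fun x => mul_nonneg (Real.rpow_nonneg (abs_nonneg _) _)
        (Real.rpow_nonneg (abs_nonneg _) _)
    have habs : |(∫ x, (φ x * ψ x * χ x - a * (ψ x * χ x) - b * (φ x * χ x) - c * (φ x * ψ x))
            * (f x) ^ 3 ∂μ) + 2 * a * b * c| ≤ ∫ x, |g₁ x| * |g₂ x * g₃ x| ∂μ := by
      rw [← hkey]
      calc |∫ x, (g₂ x * g₃ x) * g₁ x ∂μ| = ‖∫ x, (g₂ x * g₃ x) * g₁ x ∂μ‖ :=
            (Real.norm_eq_abs _).symm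
        _ ≤ ∫ x, ‖(g₂ x * g₃ x) * g₁ x‖ ∂μ := norm_integral_le_integral_norm _
        _ = ∫ x, |g₁ x| * |g₂ x * g₃ x| ∂μ := by
            refine integral_congr_ae (Filter.Eventually.of_forall fun x => ?_)
            show ‖(g₂ x * g₃ x) * g₁ x‖ = |g₁ x| * |g₂ x * g₃ x|
            rw [Real.norm_eq_abs, abs_mul, mul_comm]
    have hfinal : ∫ x, |g₁ x| * |g₂ x * g₃ x| ∂μ ≤ X ^ ((1:ℝ)/3) * (Y ^ ((1:ℝ)/3) * Z ^ ((1:ℝ)/3)) := by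
      refine hHA.trans ?_
      have h1 : (0:ℝ) < 1 / (3/2 : ℝ) := by norm_num
      refine mul_le_mul_of_nonneg_left ?_ (Real.rpow_nonneg hX0 _)
      calc (∫ x, |g₂ x| ^ ((3:ℝ)/2) * |g₃ x| ^ ((3:ℝ)/2) ∂μ) ^ (1/(3/2:ℝ))
          ≤ (Y ^ ((1:ℝ)/2) * Z ^ ((1:ℝ)/2)) ^ (1/(3/2:ℝ)) := by
            refine Real.rpow_le_rpow hT0 ?_ (by norm_num)
            simpa using hHB
        _ = Y ^ ((1:ℝ)/3) * Z ^ ((1:ℝ)/3) := by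
            rw [Real.mul_rpow (Real.rpow_nonneg hY0 _) (Real.rpow_nonneg hZ0 _),
              ← Real.rpow_mul hY0, ← Real.rpow_mul hZ0]
            norm_num
    rw [ge_iff_le, hΔφ, hΔψ, hΔχ]
    calc |(∫ x, (φ x * ψ x * χ x - a * (ψ x * χ x) - b * (φ x * χ x) - c * (φ x * ψ x))
            * (f x) ^ 3 ∂μ) + 2 * a * b * c| ≤ X ^ ((1:ℝ)/3) * (Y ^ ((1:ℝ)/3) * Z ^ ((1:ℝ)/3)) :=
          habs.trans hfinal
      _ = X ^ ((1:ℝ)/3) * Y ^ ((1:ℝ)/3) * Z ^ ((1:ℝ)/3) := by ring
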